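/- The independent entropy-regularized NPG update guarantees, for every t ≥ 0, Φ_τ(π^(t+1)) − Φ_τ(π^(t)) ≥ (1/η − √N − τ) · J(π^(t+1), π^(t)). -/

import Mathlib

open Finset

noncomputable section

/-- A probability distribution on a finite action set. -/
def IsDist {A : Type*} [Fintype A] (p : A → ℝ) : Prop :=
  (∀ a, 0 ≤ p a) ∧ ∑ a, p a = 1

/-- Shannon entropy of a distribution. -/
def entropy {A : Type*} [Fintype A] (p : A → ℝ) : ℝ :=
  -∑ a, p a * Real.log (p a)

/-- Kullback-Leibler divergence on a finite set. -/
def KLdiv {A : Type*} [Fintype A] (p q : A → ℝ) : ℝ :=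
  ∑ a, p a * (Real.log (p a) - Real.log (q a))

/-- Jeffrey divergence: the symmetrized KL divergence. -/
def Jdiv {A : Type*} [Fintype A] (p q : A → ℝ) : ℝ :=
  KLdiv p q + KLdiv q p

/-- Joint product distribution induced by a product policy. -/
def jointPmf {N : ℕ} {A : Type*} [Fintype A] (π : Fin N → A → ℝ) :
    (Fin N → A) → ℝ :=
  fun a => ∏ i, π i (a i)

/-- Expectation of `f` under the product policy `π`. -/
def expVal {N : ℕ} {A : Type*} [Fintype A] (π : Fin N → A → ℝ)
    (f : (Fin N → A) → ℝ) : ℝ :=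
  ∑ a, jointPmf π a * f a

/-- Point mass at action `a`. -/
def pmfOf {A : Type*} [DecidableEq A] (a : A) : A → ℝ :=
  fun b => if b = a then 1 else 0

/-- Marginalized utility `r_i^π(a) = E_{a_{-i} ∼ π_{-i}}[u_i(a, a_{-i})]`. -/
def margU {N : ℕ} {A : Type*} [Fintype A] [DecidableEq A]
    (u : Fin N → (Fin N → A) → ℝ) (π : Fin N → A → ℝ) (i : Fin N) (a : A) : ℝ :=
  expVal (Function.update π i (pmfOf a)) (u i)

/-- Entropy-regularized utility `u_{i,τ}(π) = u_i(π) + τ H(π_i)`. -/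
def uReg {N : ℕ} {A : Type*} [Fintype A] (u : Fin N → (Fin N → A) → ℝ) (τ : ℝ)
    (i : Fin N) (π : Fin N → A → ℝ) : ℝ :=
  expVal π (u i) + τ * entropy (π i)

/-- `QRE-gap_τ(π)`. -/
def QREgap {N : ℕ} {A : Type*} [Fintype A] [DecidableEq A]
    (u : Fin N → (Fin N → A) → ℝ) (τ : ℝ) (π : Fin N → A → ℝ) : ℝ :=
  sSup {x | ∃ (i : Fin N) (p : A → ℝ), IsDist p ∧
    x = uReg u τ i (Function.update π i p) - uReg u τ i π}

/-- `NE-gap(π)`. -/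
def NEgap {N : ℕ} {A : Type*} [Fintype A] [DecidableEq A]
    (u : Fin N → (Fin N → A) → ℝ) (π : Fin N → A → ℝ) : ℝ :=
  sSup {x | ∃ (i : Fin N) (p : A → ℝ), IsDist p ∧
    x = expVal (Function.update π i p) (u i) - expVal π (u i)}

/-- Entropy-regularized potential `Φ_τ(π) = Φ(π) + τ ∑_i H(π_i)`. -/
def regPot {N : ℕ} {A : Type*} [Fintype A] (Φ : (Fin N → A) → ℝ) (τ : ℝ)
    (π : Fin N → A → ℝ) : ℝ :=
  expVal π Φ + τ * ∑ i, entropy (π i)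

/-- `Φ` is a potential function for the game with utilities `u`. -/
def IsPotential {N : ℕ} {A : Type*} [Fintype A] [DecidableEq A]
    (u : Fin N → (Fin N → A) → ℝ) (Φ : (Fin N → A) → ℝ) : Prop :=
  ∀ (i : Fin N) (a : Fin N → A) (a' : A),
    u i a - u i (Function.update a i a') = Φ a - Φ (Function.update a i a')

/-- The independent entropy-regularized NPG update rule. -/
def NPGstep {N : ℕ} {A : Type*} [Fintype A] [DecidableEq A]
    (u : Fin N → (Fin N → A) → ℝ) (τ η : ℝ) (π : ℕ → Fin N → A → ℝ) : Prop :=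
  ∀ t i a, π (t+1) i a =
    π t i a ^ (1 - η * τ) * Real.exp (η * margU u (π t) i a) /
      ∑ a', π t i a' ^ (1 - η * τ) * Real.exp (η * margU u (π t) i a')

/-- Best-response policy `π_i^⋆(a) ∝ exp(r_i^π(a)/τ)`. -/
def bestResp {N : ℕ} {A : Type*} [Fintype A] [DecidableEq A]
    (u : Fin N → (Fin N → A) → ℝ) (τ : ℝ) (π : Fin N → A → ℝ) (i : Fin N) :
    A → ℝ :=
  fun a => Real.exp (margU u π i a / τ) / ∑ a', Real.exp (margU u π i a' / τ)

set_option linter.unusedSectionVars false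

namespace NPGaux


lemma log_lb {x y : ℝ} (hx : 0 < x) (hy : 0 < y) (hxy : y ≤ x) :
    (x - y) / (x + y) ≤ Real.log x - Real.log y := by
  have h1 : Real.log (y / x) ≤ y / x - 1 := Real.log_le_sub_one_of_pos (div_pos hy hx)
  rw [Real.log_div (ne_of_gt hy) (ne_of_gt hx)] at h1
  have h2 : (x - y) / x ≤ Real.log x - Real.log y := by
    have : y / x - 1 = -((x - y)/x) := by field_simp; ring
    rw [this] at h1; linarith
  refine le_trans ?_ h2
  exact div_le_div_of_nonneg_left (by linarith) hx (by linarith)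

lemma pw_J {x y : ℝ} (hx : 0 < x) (hy : 0 < y) :
    (x - y)^2 / (x + y) ≤ (x - y) * (Real.log x - Real.log y) := by
  rcases le_total y x with h | h
  · have h1 := log_lb hx hy h
    have h2 : (x - y)^2 / (x + y) = (x - y) * ((x - y)/(x + y)) := by ring
    rw [h2]
    exact mul_le_mul_of_nonneg_left h1 (by linarith)
  · have h1 := log_lb hy hx h
    have h2 : (x - y)^2 / (x + y) = (y - x) * ((y - x)/(y + x)) := by ring
    rw [h2]
    have h3 : (x - y) * (Real.log x - Real.log y) = (y - x) * (Real.log y - Real.log x) := by ring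
    rw [h3]
    exact mul_le_mul_of_nonneg_left h1 (by linarith : (0:ℝ) ≤ y - x)

lemma pw_J_nonneg {x y : ℝ} (hx : 0 < x) (hy : 0 < y) :
    0 ≤ (x - y) * (Real.log x - Real.log y) := by
  refine le_trans ?_ (pw_J hx hy)
  exact div_nonneg (sq_nonneg _) (by linarith)

variable {A : Type*} [Fintype A]

lemma Jdiv_eq_sum (p q : A → ℝ) :
    Jdiv p q = ∑ a, (p a - q a) * (Real.log (p a) - Real.log (q a)) := by
  unfold Jdiv KLdiv
  rw [← Finset.sum_add_distrib]
  exact Finset.sum_congr rfl fun a _ => by ring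

lemma Jdiv_nonneg {p q : A → ℝ} (hp : ∀ a, 0 < p a) (hq : ∀ a, 0 < q a) :
    0 ≤ Jdiv p q := by
  rw [Jdiv_eq_sum]
  exact Finset.sum_nonneg fun a _ => pw_J_nonneg (hp a) (hq a)

lemma Jdiv_self (p : A → ℝ) : Jdiv p p = 0 := by
  unfold Jdiv KLdiv; simp

lemma KLdiv_nonneg {p q : A → ℝ} (hp : ∀ a, 0 < p a) (hq : ∀ a, 0 < q a)
    (hp1 : ∑ a, p a = 1) (hq1 : ∑ a, q a = 1) : 0 ≤ KLdiv p q := by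
  have h : ∀ a, p a - q a ≤ p a * (Real.log (p a) - Real.log (q a)) := by
    intro a
    have h1 : Real.log (q a / p a) ≤ q a / p a - 1 := Real.log_le_sub_one_of_pos (div_pos (hq a) (hp a))
    rw [Real.log_div (ne_of_gt (hq a)) (ne_of_gt (hp a))] at h1
    have hpa := hp a
    have h2 := mul_le_mul_of_nonneg_left h1 (le_of_lt hpa)
    have h3 : p a * (q a / p a - 1) = q a - p a := by field_simp
    nlinarith
  calc (0:ℝ) = ∑ a, (p a - q a) := by rw [Finset.sum_sub_distrib, hp1, hq1]; ring
    _ ≤ ∑ a, p a * (Real.log (p a) - Real.log (q a)) := Finset.sum_le_sum fun a _ => h a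
    _ = KLdiv p q := rfl

lemma pinsker {p q : A → ℝ} (hp : ∀ a, 0 < p a) (hq : ∀ a, 0 < q a)
    (hp1 : ∑ a, p a = 1) (hq1 : ∑ a, q a = 1) :
    (∑ a, |p a - q a|)^2 ≤ 2 * Jdiv p q := by
  have key : ∀ a, |p a - q a| = Real.sqrt (p a + q a) * (|p a - q a| / Real.sqrt (p a + q a)) := by
    intro a
    have h : (0:ℝ) < Real.sqrt (p a + q a) := Real.sqrt_pos.mpr (by have := hp a; have := hq a; linarith)
    field_simp
  have hCS : ∑ a, |p a - q a| ≤
      Real.sqrt (∑ a, Real.sqrt (p a + q a) ^ 2) *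
      Real.sqrt (∑ a, (|p a - q a| / Real.sqrt (p a + q a)) ^ 2) := by
    calc ∑ a, |p a - q a|
        = ∑ a, Real.sqrt (p a + q a) * (|p a - q a| / Real.sqrt (p a + q a)) :=
          Finset.sum_congr rfl fun a _ => key a
      _ ≤ _ := Real.sum_mul_le_sqrt_mul_sqrt _ _ _
  have hsum1 : ∑ a, Real.sqrt (p a + q a) ^ 2 = 2 := by
    rw [Finset.sum_congr rfl fun a _ => Real.sq_sqrt (by have := hp a; have := hq a; linarith : (0:ℝ) ≤ p a + q a)]
    rw [Finset.sum_add_distrib, hp1, hq1]; norm_num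
  have hsum2 : ∑ a, (|p a - q a| / Real.sqrt (p a + q a)) ^ 2 ≤ Jdiv p q := by
    rw [Jdiv_eq_sum]
    refine Finset.sum_le_sum fun a _ => ?_
    have hpos : (0:ℝ) < p a + q a := by have := hp a; have := hq a; linarith
    have : (|p a - q a| / Real.sqrt (p a + q a)) ^ 2 = (p a - q a)^2 / (p a + q a) := by
      rw [div_pow, sq_abs, Real.sq_sqrt (le_of_lt hpos)]
    rw [this]
    exact pw_J (hp a) (hq a)
  have hnn : (0:ℝ) ≤ ∑ a, |p a - q a| := Finset.sum_nonneg fun a _ => abs_nonneg _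
  have hJ : 0 ≤ Jdiv p q := Jdiv_nonneg hp hq
  have hb : ∑ a, |p a - q a| ≤ Real.sqrt 2 * Real.sqrt (Jdiv p q) := by
    refine le_trans hCS ?_
    rw [hsum1]
    exact mul_le_mul_of_nonneg_left (Real.sqrt_le_sqrt hsum2) (Real.sqrt_nonneg _)
  calc (∑ a, |p a - q a|)^2 ≤ (Real.sqrt 2 * Real.sqrt (Jdiv p q))^2 := by
        exact pow_le_pow_left₀ hnn hb 2
    _ = 2 * Jdiv p q := by
        rw [mul_pow, Real.sq_sqrt (by norm_num : (0:ℝ) ≤ 2), Real.sq_sqrt hJ]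

lemma abs_sum_sub_le {X : Type*} [Fintype X] (M V f : X → ℝ)
    (hM : ∑ x, M x = 1) (hV : ∑ x, V x = 1) (hf : ∀ x, 0 ≤ f x ∧ f x ≤ 1) :
    |∑ x, M x * f x - ∑ x, V x * f x| ≤ (∑ x, |M x - V x|) / 2 := by
  have h1 : ∑ x, M x * f x - ∑ x, V x * f x = ∑ x, (M x - V x) * (f x - 1/2) := by
    have e : ∀ x, (M x - V x) * (f x - 1/2) = (M x * f x - V x * f x) - (M x - V x) * (1/2) := by
      intro x; ring
    rw [Finset.sum_congr rfl fun x _ => e x, Finset.sum_sub_distrib, Finset.sum_sub_distrib,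
      ← Finset.sum_mul, Finset.sum_sub_distrib, hM, hV]
    ring
  rw [h1]
  calc |∑ x, (M x - V x) * (f x - 1/2)| ≤ ∑ x, |(M x - V x) * (f x - 1/2)| :=
        Finset.abs_sum_le_sum_abs _ _
    _ ≤ ∑ x, |M x - V x| * (1/2) := by
        refine Finset.sum_le_sum fun x _ => ?_
        rw [abs_mul]
        refine mul_le_mul_of_nonneg_left ?_ (abs_nonneg _)
        rw [abs_le]
        constructor
        · linarith [(hf x).1]
        · linarith [(hf x).2]
    _ = (∑ x, |M x - V x|) / 2 := by rw [← Finset.sum_mul]; ring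


variable {N : ℕ} {A : Type*} [Fintype A] [DecidableEq A]


def prodErase (π : Fin N → A → ℝ) (i : Fin N) (a : Fin N → A) : ℝ :=
  ∏ j ∈ Finset.univ.erase i, π j (a j)

lemma jointPmf_eq (π : Fin N → A → ℝ) (i : Fin N) (a : Fin N → A) :
    jointPmf π a = π i (a i) * prodErase π i a :=
  (Finset.mul_prod_erase univ _ (mem_univ i)).symm

lemma prodErase_update_pol (π : Fin N → A → ℝ) (i : Fin N) (ρ : A → ℝ) (a : Fin N → A) :
    prodErase (Function.update π i ρ) i a = prodErase π i a :=
  Finset.prod_congr rfl fun j hj => by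
    rw [Function.update_of_ne (Finset.ne_of_mem_erase hj)]

lemma prodErase_update_act (π : Fin N → A → ℝ) (i : Fin N) (a : Fin N → A) (x : A) :
    prodErase π i (Function.update a i x) = prodErase π i a :=
  Finset.prod_congr rfl fun j hj => by
    rw [Function.update_of_ne (Finset.ne_of_mem_erase hj)]

lemma sum_jointPmf (π : Fin N → A → ℝ) :
    ∑ a, jointPmf π a = ∏ j, ∑ x, π j x := by
  rw [Finset.prod_univ_sum (fun _ => univ) (fun j x => π j x)]
  rw [Fintype.piFinset_univ]
  rfl

lemma sum_jointPmf_one {π : Fin N → A → ℝ} (hπ : ∀ j, ∑ x, π j x = 1) :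
    ∑ a, jointPmf π a = 1 := by
  rw [sum_jointPmf]
  simp [hπ]

lemma sum_joint_mul {π : Fin N → A → ℝ} (hπ : ∀ j, ∑ x, π j x = 1) (i : Fin N) (f : A → ℝ) :
    ∑ a, jointPmf π a * f (a i) = ∑ x, π i x * f x := by
  have h1 : ∀ a : Fin N → A, jointPmf π a * f (a i)
      = jointPmf (Function.update π i (fun x => π i x * f x)) a := by
    intro a
    rw [jointPmf_eq _ i, jointPmf_eq (Function.update π i _) i, prodErase_update_pol,
      Function.update_self]
    ring
  rw [Finset.sum_congr rfl fun a _ => h1 a, sum_jointPmf,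
    ← Finset.mul_prod_erase univ _ (mem_univ i), Function.update_self]
  have h2 : ∏ j ∈ univ.erase i, (∑ x, Function.update π i (fun x => π i x * f x) j x) = 1 := by
    refine Finset.prod_eq_one fun j hj => ?_
    rw [Finset.sum_congr rfl fun x _ => by
      rw [Function.update_of_ne (Finset.ne_of_mem_erase hj)]]
    exact hπ j
  rw [h2, mul_one]

/-- fiber-invariance lemma -/
lemma sum_weight_G {w : A → ℝ} (i : Fin N) (x : A) (G : (Fin N → A) → ℝ)
    (hG : ∀ a y, G (Function.update a i y) = G a) :
    ∑ a, w (a i) * G a = (∑ y, w y) * ∑ a, (if a i = x then 1 else 0) * G a := by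
  have fib : ∀ y : A, ∑ a, (if a i = y then 1 else 0) * G a
      = ∑ a, (if a i = x then 1 else 0) * G a := by
    intro y
    rw [Finset.sum_congr rfl (fun a _ => (ite_zero_mul _ _ _ : _ = if a i = y then (1:ℝ) * G a else 0)),
      Finset.sum_congr rfl (fun a _ => (ite_zero_mul _ _ _ : _ = if a i = x then (1:ℝ) * G a else 0))]
    rw [← Finset.sum_filter, ← Finset.sum_filter]
    refine Finset.sum_bij' (fun a _ => Function.update a i x) (fun a _ => Function.update a i y)
      ?_ ?_ ?_ ?_ ?_
    · intro a ha; simp [Function.update_self]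
    · intro a ha; simp [Function.update_self]
    · intro a ha
      simp only [mem_filter, mem_univ, true_and] at ha
      show Function.update (Function.update a i x) i y = a
      rw [Function.update_idem, ← ha, Function.update_eq_self]
    · intro a ha
      simp only [mem_filter, mem_univ, true_and] at ha
      show Function.update (Function.update a i y) i x = a
      rw [Function.update_idem, ← ha, Function.update_eq_self]
    · intro a ha
      show (1:ℝ) * G a = 1 * G (Function.update a i x)
      rw [one_mul, one_mul, hG a x]
  calc ∑ a, w (a i) * G a
      = ∑ a, ∑ y, (if a i = y then w y * G a else 0) := by
        refine Finset.sum_congr rfl fun a _ => ?_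
        rw [Finset.sum_ite_eq univ (a i) (fun y => w y * G a)]
        simp
    _ = ∑ y, ∑ a, (if a i = y then w y * G a else 0) := Finset.sum_comm
    _ = ∑ y, w y * ∑ a, (if a i = y then 1 else 0) * G a := by
        refine Finset.sum_congr rfl fun y _ => ?_
        rw [Finset.mul_sum]
        refine Finset.sum_congr rfl fun a _ => ?_
        split_ifs <;> ring
    _ = ∑ y, w y * ∑ a, (if a i = x then 1 else 0) * G a := by
        refine Finset.sum_congr rfl fun y _ => ?_
        rw [fib y]
    _ = (∑ y, w y) * ∑ a, (if a i = x then 1 else 0) * G a := by rw [Finset.sum_mul]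

lemma expVal_update_point {π : Fin N → A → ℝ} (i : Fin N) (x : A)
    (g : (Fin N → A) → ℝ) (hπi : ∑ y, π i y = 1) :
    expVal (Function.update π i (pmfOf x)) g
      = ∑ a, jointPmf π a * g (Function.update a i x) := by
  set G : (Fin N → A) → ℝ := fun a => prodErase π i a * g (Function.update a i x) with hGdef
  have hG : ∀ a y, G (Function.update a i y) = G a := by
    intro a y
    simp only [hGdef]
    rw [prodErase_update_act, Function.update_idem]
  have lhs : expVal (Function.update π i (pmfOf x)) g = ∑ a, (if a i = x then 1 else 0) * G a := by
    unfold expVal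
    refine Finset.sum_congr rfl fun a _ => ?_
    rw [jointPmf_eq _ i, prodErase_update_pol, Function.update_self]
    simp only [hGdef, pmfOf]
    by_cases h : a i = x
    · have : Function.update a i x = a := by rw [← h, Function.update_eq_self]
      rw [this]; simp [h]
    · simp [h]
  have rhs : ∑ a, jointPmf π a * g (Function.update a i x) = ∑ a, π i (a i) * G a := by
    refine Finset.sum_congr rfl fun a _ => ?_
    rw [jointPmf_eq _ i]
    simp only [hGdef]; ring
  rw [lhs, rhs, sum_weight_G i x G hG, hπi, one_mul]

lemma expVal_update (σ : Fin N → A → ℝ) (i : Fin N) (ρ : A → ℝ) (g : (Fin N → A) → ℝ) :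
    expVal (Function.update σ i ρ) g
      = ∑ x, ρ x * expVal (Function.update σ i (pmfOf x)) g := by
  have hx : ∀ x, expVal (Function.update σ i (pmfOf x)) g
      = ∑ a, (if a i = x then 1 else 0) * (prodErase σ i a * g a) := by
    intro x
    unfold expVal
    refine Finset.sum_congr rfl fun a _ => ?_
    rw [jointPmf_eq _ i, prodErase_update_pol, Function.update_self]
    simp only [pmfOf]
    ring
  calc expVal (Function.update σ i ρ) g
      = ∑ a, ρ (a i) * (prodErase σ i a * g a) := by
        unfold expVal
        refine Finset.sum_congr rfl fun a _ => ?_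
        rw [jointPmf_eq _ i, prodErase_update_pol, Function.update_self]
        ring
    _ = ∑ a, ∑ x, ρ x * ((if a i = x then 1 else 0) * (prodErase σ i a * g a)) := by
        refine Finset.sum_congr rfl fun a _ => ?_
        simp [mul_ite, ite_mul, mul_zero, zero_mul, mul_one, Finset.sum_ite_eq]
    _ = ∑ x, ∑ a, ρ x * ((if a i = x then 1 else 0) * (prodErase σ i a * g a)) :=
        Finset.sum_comm
    _ = ∑ x, ρ x * expVal (Function.update σ i (pmfOf x)) g := by
        refine Finset.sum_congr rfl fun x _ => ?_
        rw [hx x, Finset.mul_sum]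

lemma KLdiv_joint {μ ν : Fin N → A → ℝ} (hμ : ∀ j x, 0 < μ j x) (hν : ∀ j x, 0 < ν j x)
    (hμ1 : ∀ j, ∑ x, μ j x = 1) :
    KLdiv (jointPmf μ) (jointPmf ν) = ∑ i, KLdiv (μ i) (ν i) := by
  unfold KLdiv
  have hlog : ∀ a : Fin N → A, Real.log (jointPmf μ a) - Real.log (jointPmf ν a)
      = ∑ j, (Real.log (μ j (a j)) - Real.log (ν j (a j))) := by
    intro a
    unfold jointPmf
    rw [Real.log_prod (fun j _ => ne_of_gt (hμ j (a j))),
      Real.log_prod (fun j _ => ne_of_gt (hν j (a j))), Finset.sum_sub_distrib]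
  calc ∑ a, jointPmf μ a * (Real.log (jointPmf μ a) - Real.log (jointPmf ν a))
      = ∑ a, ∑ j, jointPmf μ a * (Real.log (μ j (a j)) - Real.log (ν j (a j))) := by
        refine Finset.sum_congr rfl fun a _ => ?_
        rw [hlog a, Finset.mul_sum]
    _ = ∑ j, ∑ a, jointPmf μ a * (Real.log (μ j (a j)) - Real.log (ν j (a j))) :=
        Finset.sum_comm
    _ = ∑ j, ∑ x, μ j x * (Real.log (μ j x) - Real.log (ν j x)) := by
        refine Finset.sum_congr rfl fun j _ => ?_
        exact sum_joint_mul hμ1 j (fun x => Real.log (μ j x) - Real.log (ν j x))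

lemma Jdiv_joint {μ ν : Fin N → A → ℝ} (hμ : ∀ j x, 0 < μ j x) (hν : ∀ j x, 0 < ν j x)
    (hμ1 : ∀ j, ∑ x, μ j x = 1) (hν1 : ∀ j, ∑ x, ν j x = 1) :
    Jdiv (jointPmf μ) (jointPmf ν) = ∑ i, Jdiv (μ i) (ν i) := by
  unfold Jdiv
  rw [KLdiv_joint hμ hν hμ1, KLdiv_joint hν hμ hν1, Finset.sum_add_distrib]


lemma margU_eq (u : Fin N → (Fin N → A) → ℝ) {π : Fin N → A → ℝ} (i : Fin N) (x : A)
    (hπi : ∑ y, π i y = 1) :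
    margU u π i x = ∑ a, jointPmf π a * u i (Function.update a i x) :=
  expVal_update_point i x (u i) hπi

lemma margPhi_sub_margU (u : Fin N → (Fin N → A) → ℝ) (Φ : (Fin N → A) → ℝ)
    (hpot : IsPotential u Φ) {π : Fin N → A → ℝ} (i : Fin N) (x : A)
    (hπi : ∑ y, π i y = 1) :
    expVal (Function.update π i (pmfOf x)) Φ - margU u π i x
      = ∑ a, jointPmf π a * (Φ a - u i a) := by
  rw [margU, expVal_update_point i x Φ hπi, expVal_update_point i x (u i) hπi,
    ← Finset.sum_sub_distrib]
  refine Finset.sum_congr rfl fun a _ => ?_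
  rw [← mul_sub]
  congr 1
  have h := hpot i a x
  linarith

end NPGaux

open NPGaux
/-- Performance improvement of the regularized potential under independent NPG. -/
theorem potential_improvement_sqrtN
    {N : ℕ} (hN : 0 < N) {A : Type*} [Fintype A] [DecidableEq A] [Nonempty A]
    (u : Fin N → (Fin N → A) → ℝ) (hu : ∀ i a, 0 ≤ u i a ∧ u i a ≤ 1)
    (Φ : (Fin N → A) → ℝ) (Φmax : ℝ) (hΦ : ∀ a, 0 ≤ Φ a ∧ Φ a ≤ Φmax)
    (hpot : IsPotential u Φ)
    (τ η : ℝ) (hτ : 0 < τ) (hη : 0 < η)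
    (π : ℕ → Fin N → A → ℝ)
    (hdist : ∀ i, IsDist (π 0 i)) (hpos : ∀ i a, 0 < π 0 i a)
    (hstep : NPGstep u τ η π) :
    ∀ t : ℕ,
      regPot Φ τ (π (t + 1)) - regPot Φ τ (π t) ≥
        (1 / η - Real.sqrt N - τ) * Jdiv (jointPmf (π (t + 1))) (jointPmf (π t)) := by
  -- invariant: every π s is a positive probability distribution
  have hPD : ∀ s : ℕ, (∀ i a, 0 < π s i a) ∧ (∀ i, ∑ a, π s i a = 1) := by
    intro s
    induction s with
    | zero => exact ⟨hpos, fun i => (hdist i).2⟩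
    | succ s ih =>
      obtain ⟨hp, hs⟩ := ih
      have key : ∀ i : Fin N,
          0 < ∑ a', π s i a' ^ (1 - η*τ) * Real.exp (η * margU u (π s) i a') := by
        intro i
        refine Finset.sum_pos (fun x _ => ?_) Finset.univ_nonempty
        exact mul_pos (Real.rpow_pos_of_pos (hp i x) _) (Real.exp_pos _)
      constructor
      · intro i a
        rw [hstep s i a]
        exact div_pos (mul_pos (Real.rpow_pos_of_pos (hp i a) _) (Real.exp_pos _)) (key i)
      · intro i
        rw [Finset.sum_congr rfl fun a _ => hstep s i a, ← Finset.sum_div,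
          div_self (ne_of_gt (key i))]
  intro t
  obtain ⟨hppos, hp1⟩ := hPD t
  obtain ⟨hqpos, hq1⟩ := hPD (t+1)
  set Z : Fin N → ℝ := fun i => ∑ a', π t i a' ^ (1 - η*τ) * Real.exp (η * margU u (π t) i a')
    with hZdef
  have hZpos : ∀ i, 0 < Z i := by
    intro i
    refine Finset.sum_pos (fun x _ => ?_) Finset.univ_nonempty
    exact mul_pos (Real.rpow_pos_of_pos (hppos i x) _) (Real.exp_pos _)
  have hlogq : ∀ i a, Real.log (π (t+1) i a)
      = (1 - η*τ) * Real.log (π t i a) + η * margU u (π t) i a - Real.log (Z i) := by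
    intro i a
    rw [hstep t i a]
    rw [Real.log_div (ne_of_gt (mul_pos (Real.rpow_pos_of_pos (hppos i a) _) (Real.exp_pos _))) (ne_of_gt (hZpos i)),
      Real.log_mul (ne_of_gt (Real.rpow_pos_of_pos (hppos i a) _)) (ne_of_gt (Real.exp_pos _)),
      Real.log_rpow (hppos i a), Real.log_exp]
  have hr : ∀ i a, margU u (π t) i a
      = (Real.log (π (t+1) i a) - (1 - η*τ) * Real.log (π t i a) + Real.log (Z i)) / η := by
    intro i a
    have h := hlogq i a
    field_simp
    linarith
  -- per-agent regularized improvement identity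
  have keyC : ∀ i : Fin N,
      ∑ x, (π (t+1) i x - π t i x) * margU u (π t) i x
        + τ * (entropy (π (t+1) i) - entropy (π t i))
      = (1/η) * Jdiv (π (t+1) i) (π t i) - τ * KLdiv (π (t+1) i) (π t i) := by
    intro i
    have e1 : ∀ x, (π (t+1) i x - π t i x) * margU u (π t) i x
        = (1/η)*(π (t+1) i x * Real.log (π (t+1) i x))
          - (1/η)*(π t i x * Real.log (π (t+1) i x))
          - ((1-η*τ)/η)*(π (t+1) i x * Real.log (π t i x))
          + ((1-η*τ)/η)*(π t i x * Real.log (π t i x))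
          + (Real.log (Z i)/η)*(π (t+1) i x) - (Real.log (Z i)/η)*(π t i x) := by
      intro x
      rw [hr i x]
      have hηne : η ≠ 0 := ne_of_gt hη
      field_simp
      ring
    rw [Finset.sum_congr rfl fun x _ => e1 x]
    unfold entropy Jdiv KLdiv
    simp only [mul_sub, Finset.sum_add_distrib, Finset.sum_sub_distrib, ← Finset.mul_sum]
    rw [hq1 i, hp1 i]
    have hηne : η ≠ 0 := ne_of_gt hη
    field_simp
    ring
  -- per-agent inequality
  have keyC' : ∀ i : Fin N,
      ∑ x, (π (t+1) i x - π t i x) * margU u (π t) i x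
        + τ * (entropy (π (t+1) i) - entropy (π t i))
      ≥ (1/η - τ) * Jdiv (π (t+1) i) (π t i) := by
    intro i
    rw [keyC i]
    have hKL : 0 ≤ KLdiv (π t i) (π (t+1) i) :=
      KLdiv_nonneg (hppos i) (hqpos i) (hp1 i) (hq1 i)
    have hJd : Jdiv (π (t+1) i) (π t i)
        = KLdiv (π (t+1) i) (π t i) + KLdiv (π t i) (π (t+1) i) := rfl
    nlinarith [hτ.le]
  -- joint positivity and chain rule
  have hjq : ∀ a, 0 < jointPmf (π (t+1)) a := fun a => Finset.prod_pos fun j _ => hqpos j (a j)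
  have hjp : ∀ a, 0 < jointPmf (π t) a := fun a => Finset.prod_pos fun j _ => hppos j (a j)
  have hJchain : Jdiv (jointPmf (π (t+1))) (jointPmf (π t)) = ∑ i, Jdiv (π (t+1) i) (π t i) :=
    Jdiv_joint hqpos hppos hq1 hp1
  set J := Jdiv (jointPmf (π (t+1))) (jointPmf (π t)) with hJdef
  have hJnn : 0 ≤ J := Jdiv_nonneg hjq hjp
  -- hybrid policies
  set σ : ℕ → Fin N → A → ℝ := fun k j => if (j:ℕ) < k then π (t+1) j else π t j with hσdef
  have hσ0 : σ 0 = π t := by funext j; simp [hσdef]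
  have hσN : σ N = π (t+1) := by funext j; simp [hσdef, j.isLt]
  have hσpos : ∀ k j x, 0 < σ k j x := by
    intro k j x
    by_cases h : (j:ℕ) < k
    · simp only [hσdef, if_pos h]; exact hqpos j x
    · simp only [hσdef, if_neg h]; exact hppos j x
  have hσ1 : ∀ k j, ∑ x, σ k j x = 1 := by
    intro k j
    by_cases h : (j:ℕ) < k
    · simp only [hσdef, if_pos h]; exact hq1 j
    · simp only [hσdef, if_neg h]; exact hp1 j
  have hσi : ∀ i : Fin N, σ (i:ℕ) i = π t i := by
    intro i; simp [hσdef]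
  have hupd : ∀ i : Fin N, σ ((i:ℕ)+1) = Function.update (σ (i:ℕ)) i (π (t+1) i) := by
    intro i
    funext j
    by_cases h : j = i
    · subst h
      rw [Function.update_self]
      simp [hσdef]
    · rw [Function.update_of_ne h]
      simp only [hσdef]
      have hiff : ((j:ℕ) < (i:ℕ)+1) ↔ ((j:ℕ) < (i:ℕ)) := by
        constructor
        · intro hlt
          rcases Nat.lt_succ_iff_lt_or_eq.mp hlt with h' | h'
          · exact h'
          · exact absurd (Fin.ext h') h
        · exact fun h' => Nat.lt_succ_of_lt h'
      rw [if_congr hiff rfl rfl]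
  -- telescoping
  have htel : expVal (π (t+1)) Φ - expVal (π t) Φ
      = ∑ i : Fin N, (expVal (σ ((i:ℕ)+1)) Φ - expVal (σ (i:ℕ)) Φ) := by
    rw [Fin.sum_univ_eq_sum_range (fun k => expVal (σ (k+1)) Φ - expVal (σ k) Φ) N,
      Finset.sum_range_sub (fun k => expVal (σ k) Φ), hσ0, hσN]
  -- per-agent potential step
  have hstepi : ∀ i : Fin N, expVal (σ ((i:ℕ)+1)) Φ - expVal (σ (i:ℕ)) Φ
      = ∑ x, (π (t+1) i x - π t i x) * margU u (σ (i:ℕ)) i x := by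
    intro i
    have hC : ∀ x, expVal (Function.update (σ (i:ℕ)) i (pmfOf x)) Φ
        = margU u (σ (i:ℕ)) i x + ∑ a, jointPmf (σ (i:ℕ)) a * (Φ a - u i a) := by
      intro x
      have h := margPhi_sub_margU u Φ hpot i x (hσ1 (i:ℕ) i)
      linarith
    have h1 : expVal (σ ((i:ℕ)+1)) Φ
        = ∑ x, π (t+1) i x * expVal (Function.update (σ (i:ℕ)) i (pmfOf x)) Φ := by
      rw [hupd i, expVal_update]
    have h2 : expVal (σ (i:ℕ)) Φ
        = ∑ x, π t i x * expVal (Function.update (σ (i:ℕ)) i (pmfOf x)) Φ := by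
      conv_lhs => rw [show σ (i:ℕ) = Function.update (σ (i:ℕ)) i (π t i) by
        rw [← hσi i, Function.update_eq_self]]
      rw [expVal_update]
    rw [h1, h2, ← Finset.sum_sub_distrib]
    have e : ∀ x, π (t+1) i x * expVal (Function.update (σ (i:ℕ)) i (pmfOf x)) Φ
        - π t i x * expVal (Function.update (σ (i:ℕ)) i (pmfOf x)) Φ
        = (π (t+1) i x - π t i x) * margU u (σ (i:ℕ)) i x
          + (∑ a, jointPmf (σ (i:ℕ)) a * (Φ a - u i a)) * (π (t+1) i x - π t i x) := by
      intro x
      rw [hC x]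
      ring
    rw [Finset.sum_congr rfl fun x _ => e x, Finset.sum_add_distrib, ← Finset.mul_sum,
      Finset.sum_sub_distrib, hq1 i, hp1 i]
    simp
  -- uniform bound on marginalized-utility deviation
  have hTVi : ∀ (i : Fin N) (x : A),
      |margU u (σ (i:ℕ)) i x - margU u (π t) i x| ≤ Real.sqrt (2*J) / 2 := by
    intro i x
    have hjσ : ∀ a, 0 < jointPmf (σ (i:ℕ)) a :=
      fun a => Finset.prod_pos fun j _ => hσpos (i:ℕ) j (a j)
    have hb : |margU u (σ (i:ℕ)) i x - margU u (π t) i x|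
        ≤ (∑ a, |jointPmf (σ (i:ℕ)) a - jointPmf (π t) a|) / 2 := by
      rw [margU_eq u i x (hσ1 (i:ℕ) i), margU_eq u i x (hp1 i)]
      exact abs_sum_sub_le _ _ _ (sum_jointPmf_one (hσ1 (i:ℕ))) (sum_jointPmf_one hp1)
        (fun a => hu i (Function.update a i x))
    have hle : Jdiv (jointPmf (σ (i:ℕ))) (jointPmf (π t)) ≤ J := by
      rw [Jdiv_joint (fun j => hσpos (i:ℕ) j) hppos (hσ1 (i:ℕ)) hp1, hJchain]
      refine Finset.sum_le_sum fun j _ => ?_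
      by_cases h : (j:ℕ) < (i:ℕ)
      · rw [show σ (i:ℕ) j = π (t+1) j from by simp only [hσdef, if_pos h]]
      · rw [show σ (i:ℕ) j = π t j from by simp only [hσdef, if_neg h], Jdiv_self]
        exact Jdiv_nonneg (hqpos j) (hppos j)
    have hTV : (∑ a, |jointPmf (σ (i:ℕ)) a - jointPmf (π t) a|) ≤ Real.sqrt (2*J) := by
      have hpin := pinsker hjσ hjp (sum_jointPmf_one (hσ1 (i:ℕ))) (sum_jointPmf_one hp1)
      refine (Real.le_sqrt (Finset.sum_nonneg fun a _ => abs_nonneg _) (by linarith)).mpr ?_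
      calc (∑ a, |jointPmf (σ (i:ℕ)) a - jointPmf (π t) a|)^2
          ≤ 2 * Jdiv (jointPmf (σ (i:ℕ))) (jointPmf (π t)) := hpin
        _ ≤ 2 * J := by linarith
    linarith
  -- total variation distances per agent
  set d : Fin N → ℝ := fun i => ∑ x, |π (t+1) i x - π t i x| with hddef
  have hdnn : ∀ i, 0 ≤ d i := fun i => Finset.sum_nonneg fun x _ => abs_nonneg _
  have hd2 : ∀ i, (d i)^2 ≤ 2 * Jdiv (π (t+1) i) (π t i) :=
    fun i => pinsker (hqpos i) (hppos i) (hq1 i) (hp1 i)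
  have hsumd : ∑ i, d i ≤ Real.sqrt N * Real.sqrt (2*J) := by
    have hc : ∑ i, d i ≤ Real.sqrt (∑ _i : Fin N, (1:ℝ)^2) * Real.sqrt (∑ i, (d i)^2) := by
      have := Real.sum_mul_le_sqrt_mul_sqrt (univ : Finset (Fin N)) (fun _ => (1:ℝ)) d
      simpa using this
    have h1 : (∑ _i : Fin N, (1:ℝ)^2) = (N:ℝ) := by simp
    have h2 : ∑ i, (d i)^2 ≤ 2*J := by
      calc ∑ i, (d i)^2 ≤ ∑ i, 2 * Jdiv (π (t+1) i) (π t i) :=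
            Finset.sum_le_sum fun i _ => hd2 i
        _ = 2 * J := by rw [← Finset.mul_sum, hJchain]
    calc ∑ i, d i ≤ Real.sqrt (∑ _i : Fin N, (1:ℝ)^2) * Real.sqrt (∑ i, (d i)^2) := hc
      _ ≤ Real.sqrt N * Real.sqrt (2*J) := by
          rw [h1]
          exact mul_le_mul_of_nonneg_left (Real.sqrt_le_sqrt h2) (Real.sqrt_nonneg _)
  -- bound the error term
  have herr : |∑ i : Fin N, ∑ x, (π (t+1) i x - π t i x)
        * (margU u (σ (i:ℕ)) i x - margU u (π t) i x)| ≤ Real.sqrt N * J := by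
    have hTi : ∀ i : Fin N, |∑ x, (π (t+1) i x - π t i x)
        * (margU u (σ (i:ℕ)) i x - margU u (π t) i x)| ≤ d i * (Real.sqrt (2*J) / 2) := by
      intro i
      calc |∑ x, (π (t+1) i x - π t i x) * (margU u (σ (i:ℕ)) i x - margU u (π t) i x)|
          ≤ ∑ x, |(π (t+1) i x - π t i x) * (margU u (σ (i:ℕ)) i x - margU u (π t) i x)| :=
            Finset.abs_sum_le_sum_abs _ _
        _ ≤ ∑ x, |π (t+1) i x - π t i x| * (Real.sqrt (2*J) / 2) := by
            refine Finset.sum_le_sum fun x _ => ?_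
            rw [abs_mul]
            exact mul_le_mul_of_nonneg_left (hTVi i x) (abs_nonneg _)
        _ = d i * (Real.sqrt (2*J) / 2) := by rw [hddef, ← Finset.sum_mul]
    calc |∑ i : Fin N, ∑ x, (π (t+1) i x - π t i x)
          * (margU u (σ (i:ℕ)) i x - margU u (π t) i x)|
        ≤ ∑ i : Fin N, |∑ x, (π (t+1) i x - π t i x)
          * (margU u (σ (i:ℕ)) i x - margU u (π t) i x)| := Finset.abs_sum_le_sum_abs _ _
      _ ≤ ∑ i, d i * (Real.sqrt (2*J) / 2) := Finset.sum_le_sum fun i _ => hTi i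
      _ = (∑ i, d i) * (Real.sqrt (2*J) / 2) := by rw [← Finset.sum_mul]
      _ ≤ (Real.sqrt N * Real.sqrt (2*J)) * (Real.sqrt (2*J) / 2) := by
          refine mul_le_mul_of_nonneg_right hsumd ?_
          positivity
      _ = Real.sqrt N * (Real.sqrt (2*J) * Real.sqrt (2*J)) / 2 := by ring
      _ = Real.sqrt N * J := by
          rw [Real.mul_self_sqrt (by linarith)]
          ring
  -- main decomposition
  have main_eq : regPot Φ τ (π (t+1)) - regPot Φ τ (π t)
      = (∑ i, (∑ x, (π (t+1) i x - π t i x) * margU u (π t) i x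
          + τ * (entropy (π (t+1) i) - entropy (π t i))))
        + ∑ i : Fin N, ∑ x, (π (t+1) i x - π t i x)
          * (margU u (σ (i:ℕ)) i x - margU u (π t) i x) := by
    have h0 : regPot Φ τ (π (t+1)) - regPot Φ τ (π t)
        = (expVal (π (t+1)) Φ - expVal (π t) Φ)
          + ∑ i, τ * (entropy (π (t+1) i) - entropy (π t i)) := by
      unfold regPot
      rw [show ∑ i, τ * (entropy (π (t+1) i) - entropy (π t i))
          = τ * ((∑ i, entropy (π (t+1) i)) - ∑ i, entropy (π t i)) from by
        rw [← Finset.mul_sum, Finset.sum_sub_distrib]]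
      ring
    rw [h0, htel, Finset.sum_congr rfl fun i _ => hstepi i]
    have hsplit : ∀ i : Fin N,
        (∑ x, (π (t+1) i x - π t i x) * margU u (σ (i:ℕ)) i x)
        = (∑ x, (π (t+1) i x - π t i x) * margU u (π t) i x)
          + ∑ x, (π (t+1) i x - π t i x)
            * (margU u (σ (i:ℕ)) i x - margU u (π t) i x) := by
      intro i
      rw [← Finset.sum_add_distrib]
      exact Finset.sum_congr rfl fun x _ => by ring
    rw [Finset.sum_congr rfl fun i _ => hsplit i]
    simp only [Finset.sum_add_distrib]
    ring
  -- assemble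
  have hA : ∑ i, (∑ x, (π (t+1) i x - π t i x) * margU u (π t) i x
      + τ * (entropy (π (t+1) i) - entropy (π t i))) ≥ (1/η - τ) * J := by
    calc ∑ i, (∑ x, (π (t+1) i x - π t i x) * margU u (π t) i x
          + τ * (entropy (π (t+1) i) - entropy (π t i)))
        ≥ ∑ i, (1/η - τ) * Jdiv (π (t+1) i) (π t i) :=
          Finset.sum_le_sum fun i _ => keyC' i
      _ = (1/η - τ) * J := by rw [← Finset.mul_sum, hJchain]
  have hB : ∑ i : Fin N, ∑ x, (π (t+1) i x - π t i x)
      * (margU u (σ (i:ℕ)) i x - margU u (π t) i x) ≥ -(Real.sqrt N * J) := by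
    have h1 := neg_abs_le (∑ i : Fin N, ∑ x, (π (t+1) i x - π t i x)
      * (margU u (σ (i:ℕ)) i x - margU u (π t) i x))
    linarith
  have hrw : (1/η - Real.sqrt N - τ) * J = (1/η - τ)*J - Real.sqrt N * J := by ring
  linarith
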